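/- Let R be a finite (not necessarily unital, not necessarily commutative) ring and let S₁ ⊆ S₂ be subrings of R. Then Pr(S₂, R) ≤ Pr(S₁, R) ≤ Pr(S₁, S₂). -/

import Mathlib

open scoped Pointwise

/-- The probability that a randomly chosen pair, one element from `S` and one from `T`,
commutes (multiplicatively). For a subring `S` of a finite ring `R` this gives
`Pr(S, R) = relCommProb R S Set.univ`, `Pr(R) = relCommProb R Set.univ Set.univ`, etc. -/
noncomputable def relCommProb (R : Type*) [NonUnitalRing R] (S T : Set R) : ℚ :=
  (Nat.card {p : S × T // (p.1 : R) * (p.2 : R) = (p.2 : R) * (p.1 : R)} : ℚ) /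
    ((Nat.card S : ℚ) * (Nat.card T : ℚ))

/-- `C_S(r)`: the centralizer of `r` in the subring `S`, as an additive subgroup of `R`.
Taking `S = ⊤` gives `C_R(r)`. -/
def centIn {R : Type*} [NonUnitalRing R] (S : NonUnitalSubring R) (r : R) : AddSubgroup R where
  carrier := {x | x ∈ S ∧ x * r = r * x}
  zero_mem' := ⟨S.zero_mem, by rw [zero_mul, mul_zero]⟩
  add_mem' := by
    rintro a b ⟨ha, ha'⟩ ⟨hb, hb'⟩
    exact ⟨S.add_mem ha hb, by rw [add_mul, mul_add, ha', hb']⟩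
  neg_mem' := by
    rintro a ⟨ha, ha'⟩
    exact ⟨S.neg_mem ha, by rw [neg_mul, mul_neg, ha']⟩

/-- `Z(S, R)`: the elements of the subring `S` commuting with every element of `R`,
as an additive subgroup of `R`.  Taking `S = ⊤` gives the center `Z(R)`. -/
def zCenter {R : Type*} [NonUnitalRing R] (S : NonUnitalSubring R) : AddSubgroup R where
  carrier := {x | x ∈ S ∧ ∀ r : R, x * r = r * x}
  zero_mem' := ⟨S.zero_mem, fun r => by rw [zero_mul, mul_zero]⟩
  add_mem' := by
    rintro a b ⟨ha, ha'⟩ ⟨hb, hb'⟩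
    exact ⟨S.add_mem ha hb, fun r => by rw [add_mul, mul_add, ha' r, hb' r]⟩
  neg_mem' := by
    rintro a ⟨ha, ha'⟩
    exact ⟨S.neg_mem ha, fun r => by rw [neg_mul, mul_neg, ha' r]⟩

/-- `K(S, R)`: the set of additive commutators `s*r - r*s` with `s ∈ S`, `r ∈ R`. -/
def kSet {R : Type*} [NonUnitalRing R] (S : NonUnitalSubring R) : Set R :=
  {x | ∃ s ∈ S, ∃ r : R, x = s * r - r * s}

/-- `[S, R]`: the additive subgroup of `(R, +)` generated by `K(S, R)`. -/
def commSub {R : Type*} [NonUnitalRing R] (S : NonUnitalSubring R) : AddSubgroup R :=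
  AddSubgroup.closure (kSet S)

/-- `[x, R]`: the additive subgroup of all commutators `x*y - y*x`, `y ∈ R`. -/
def elemComm {R : Type*} [NonUnitalRing R] (x : R) : AddSubgroup R where
  carrier := {z | ∃ y : R, z = x * y - y * x}
  zero_mem' := ⟨0, by simp⟩
  add_mem' := by
    rintro a b ⟨y, rfl⟩ ⟨z, rfl⟩
    exact ⟨y + z, by rw [mul_add, add_mul]; abel⟩
  neg_mem' := by
    rintro a ⟨y, rfl⟩
    exact ⟨-y, by rw [mul_neg, neg_mul]; abel⟩
section MyAux

lemma myCardKey {G : Type*} [AddCommGroup G] [Finite G] (A B C : AddSubgroup G)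
    (hA : A ≤ C) (hB : B ≤ C) :
    Nat.card A * Nat.card B ≤ Nat.card (A ⊓ B : AddSubgroup G) * Nat.card C := by
  have h1 : Nat.card (A ⊓ B : AddSubgroup G) * ((A ⊓ B).relIndex A) = Nat.card A := by
    have := AddSubgroup.card_mul_index ((A ⊓ B).addSubgroupOf A)
    rwa [Nat.card_congr (AddSubgroup.addSubgroupOfEquivOfLe inf_le_left).toEquiv] at this
  have h2 : Nat.card B * (B.relIndex (A ⊔ B)) = Nat.card (A ⊔ B : AddSubgroup G) := by
    have := AddSubgroup.card_mul_index (B.addSubgroupOf (A ⊔ B))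
    rwa [Nat.card_congr (AddSubgroup.addSubgroupOfEquivOfLe le_sup_right).toEquiv] at this
  have h3 : (A ⊓ B).relIndex A = B.relIndex (A ⊔ B) := by
    rw [inf_comm, AddSubgroup.inf_relIndex_right, ← AddSubgroup.relIndex_sup_right]
  have h4 : Nat.card (A ⊔ B : AddSubgroup G) ≤ Nat.card C :=
    AddSubgroup.card_le_of_le (sup_le hA hB)
  calc Nat.card A * Nat.card B
      = Nat.card (A ⊓ B : AddSubgroup G) * ((A ⊓ B).relIndex A) * Nat.card B := by rw [h1]
    _ = Nat.card (A ⊓ B : AddSubgroup G) * (Nat.card B * (B.relIndex (A ⊔ B))) := by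
        rw [h3]; ring
    _ = Nat.card (A ⊓ B : AddSubgroup G) * Nat.card (A ⊔ B : AddSubgroup G) := by rw [h2]
    _ ≤ _ := Nat.mul_le_mul_left _ h4

lemma myNatCardSigma {ι : Type*} [Fintype ι] (F : ι → Type*) [∀ i, Fintype (F i)] :
    Nat.card (Σ i, F i) = ∑ i, Nat.card (F i) := by
  simp [Nat.card_eq_fintype_card, Fintype.card_sigma]

variable {R : Type*} [NonUnitalRing R] [Fintype R]

def myCentIn (S : NonUnitalSubring R) (r : R) : AddSubgroup R where
  carrier := {x | x ∈ S ∧ x * r = r * x}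
  zero_mem' := ⟨S.zero_mem, by rw [zero_mul, mul_zero]⟩
  add_mem' := by
    rintro a b ⟨ha, ha'⟩ ⟨hb, hb'⟩
    exact ⟨S.add_mem ha hb, by rw [add_mul, mul_add, ha', hb']⟩
  neg_mem' := by
    rintro a ⟨ha, ha'⟩
    exact ⟨S.neg_mem ha, by rw [neg_mul, mul_neg, ha']⟩

lemma mem_myCentIn {S : NonUnitalSubring R} {r x : R} :
    x ∈ myCentIn S r ↔ x ∈ S ∧ x * r = r * x := Iff.rfl

lemma card_coe_eq_card_toAddSubgroup (S : NonUnitalSubring R) :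
    Nat.card (S : Set R) = Nat.card S.toAddSubgroup :=
  Nat.card_congr (Equiv.subtypeEquivRight fun _ => Iff.rfl)

lemma card_cent_subring (S : NonUnitalSubring R) (r : R) :
    Nat.card {s : (S : Set R) // (s : R) * r = r * (s : R)} = Nat.card (myCentIn S r) :=
  Nat.card_congr ⟨fun x => ⟨x.1.1, x.1.2, x.2⟩, fun y => ⟨⟨y.1, y.2.1⟩, y.2.2⟩,
    fun _ => rfl, fun _ => rfl⟩

lemma card_cent_univ (r : R) :
    Nat.card {s : (Set.univ : Set R) // (s : R) * r = r * (s : R)} =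
      Nat.card (myCentIn (⊤ : NonUnitalSubring R) r) :=
  Nat.card_congr ⟨fun x => ⟨x.1.1, trivial, x.2⟩, fun y => ⟨⟨y.1, trivial⟩, y.2.2⟩,
    fun _ => rfl, fun _ => rfl⟩

lemma card_univ_set : Nat.card (Set.univ : Set R) = Nat.card R :=
  Nat.card_congr (Equiv.Set.univ R)

lemma point1 (S₁ S₂ : NonUnitalSubring R) (h : S₁ ≤ S₂) (r : R) :
    Nat.card {s : (S₂ : Set R) // (s : R) * r = r * (s : R)} * Nat.card (S₁ : Set R) ≤
    Nat.card {s : (S₁ : Set R) // (s : R) * r = r * (s : R)} * Nat.card (S₂ : Set R) := by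
  have hinf : myCentIn S₂ r ⊓ S₁.toAddSubgroup = myCentIn S₁ r := by
    ext x
    simp only [AddSubgroup.mem_inf, mem_myCentIn]
    exact ⟨fun ⟨⟨_, hc⟩, h1⟩ => ⟨h1, hc⟩, fun ⟨h1, hc⟩ => ⟨⟨h h1, hc⟩, h1⟩⟩
  have key := myCardKey (myCentIn S₂ r) S₁.toAddSubgroup S₂.toAddSubgroup
    (fun x hx => hx.1) h
  rw [hinf] at key
  rw [card_cent_subring, card_cent_subring, card_coe_eq_card_toAddSubgroup,
    card_coe_eq_card_toAddSubgroup]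
  exact key
lemma point2 (S₂ : NonUnitalSubring R) (s : R) :
    Nat.card {t : (Set.univ : Set R) // s * (t : R) = (t : R) * s} * Nat.card (S₂ : Set R) ≤
    Nat.card {t : (S₂ : Set R) // s * (t : R) = (t : R) * s} * Nat.card (Set.univ : Set R) := by
  have hinf : myCentIn (⊤ : NonUnitalSubring R) s ⊓ S₂.toAddSubgroup = myCentIn S₂ s := by
    ext x
    simp only [AddSubgroup.mem_inf, mem_myCentIn]
    exact ⟨fun ⟨⟨_, hc⟩, h1⟩ => ⟨h1, hc⟩, fun ⟨h1, hc⟩ => ⟨⟨trivial, hc⟩, h1⟩⟩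
  have key := myCardKey (myCentIn (⊤ : NonUnitalSubring R) s) S₂.toAddSubgroup
    (⊤ : AddSubgroup R) le_top le_top
  rw [hinf] at key
  have e1 : Nat.card {t : (Set.univ : Set R) // s * (t : R) = (t : R) * s} =
      Nat.card (myCentIn (⊤ : NonUnitalSubring R) s) :=
    Nat.card_congr ⟨fun x => ⟨x.1.1, trivial, x.2.symm⟩, fun y => ⟨⟨y.1, trivial⟩, y.2.2.symm⟩,
      fun _ => rfl, fun _ => rfl⟩
  have e2 : Nat.card {t : (S₂ : Set R) // s * (t : R) = (t : R) * s} =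
      Nat.card (myCentIn S₂ s) :=
    Nat.card_congr ⟨fun x => ⟨x.1.1, x.1.2, x.2.symm⟩, fun y => ⟨⟨y.1, y.2.1⟩, y.2.2.symm⟩,
      fun _ => rfl, fun _ => rfl⟩
  have e3 : Nat.card (Set.univ : Set R) = Nat.card (⊤ : AddSubgroup R) := by
    rw [card_univ_set]
    exact (Nat.card_congr AddSubgroup.topEquiv.toEquiv).symm
  rw [e1, e2, e3, card_coe_eq_card_toAddSubgroup]
  exact key

end MyAux

section MyCount
open scoped Classical

variable {R : Type*} [NonUnitalRing R] [Fintype R]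

lemma card_comm_snd (S T : Set R) :
    Nat.card {p : S × T // (p.1 : R) * (p.2 : R) = (p.2 : R) * (p.1 : R)} =
      ∑ t : T, Nat.card {s : S // (s : R) * (t : R) = (t : R) * (s : R)} := by
  classical
  have e : {p : S × T // (p.1 : R) * (p.2 : R) = (p.2 : R) * (p.1 : R)} ≃
      Σ t : T, {s : S // (s : R) * (t : R) = (t : R) * (s : R)} :=
    ⟨fun x => ⟨x.1.2, x.1.1, x.2⟩, fun x => ⟨(x.2.1, x.1), x.2.2⟩,
      fun _ => rfl, fun _ => rfl⟩
  rw [Nat.card_congr e, myNatCardSigma]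

lemma card_comm_fst (S T : Set R) :
    Nat.card {p : S × T // (p.1 : R) * (p.2 : R) = (p.2 : R) * (p.1 : R)} =
      ∑ s : S, Nat.card {t : T // (s : R) * (t : R) = (t : R) * (s : R)} := by
  classical
  have e : {p : S × T // (p.1 : R) * (p.2 : R) = (p.2 : R) * (p.1 : R)} ≃
      Σ s : S, {t : T // (s : R) * (t : R) = (t : R) * (s : R)} :=
    ⟨fun x => ⟨x.1.1, x.1.2, x.2⟩, fun x => ⟨(x.1, x.2.1), x.2.2⟩,
      fun _ => rfl, fun _ => rfl⟩
  rw [Nat.card_congr e, myNatCardSigma]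

end MyCount


/-- For subrings `S₁ ⊆ S₂` of a finite ring `R`:
`Pr(S₂, R) ≤ Pr(S₁, R) ≤ Pr(S₁, S₂)`. -/
theorem relCommProb_antitone_and_le {R : Type*} [NonUnitalRing R] [Fintype R]
    (S₁ S₂ : NonUnitalSubring R) (h : S₁ ≤ S₂) :
    relCommProb R (S₂ : Set R) Set.univ ≤ relCommProb R (S₁ : Set R) Set.univ ∧
    relCommProb R (S₁ : Set R) Set.univ ≤ relCommProb R (S₁ : Set R) (S₂ : Set R) := by
  classical
  have hc1 : 0 < Nat.card (S₁ : Set R) := Nat.card_pos_iff.mpr ⟨⟨⟨0, S₁.zero_mem⟩⟩, inferInstance⟩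
  have hc2 : 0 < Nat.card (S₂ : Set R) := Nat.card_pos_iff.mpr ⟨⟨⟨0, S₂.zero_mem⟩⟩, inferInstance⟩
  have hcR : 0 < Nat.card (Set.univ : Set R) :=
    Nat.card_pos_iff.mpr ⟨⟨⟨0, trivial⟩⟩, inferInstance⟩
  have hq1 : (0 : ℚ) < (Nat.card (S₁ : Set R) : ℚ) := by exact_mod_cast hc1
  have hq2 : (0 : ℚ) < (Nat.card (S₂ : Set R) : ℚ) := by exact_mod_cast hc2
  have hqR : (0 : ℚ) < (Nat.card (Set.univ : Set R) : ℚ) := by exact_mod_cast hcR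
  constructor
  · -- Pr(S₂, R) ≤ Pr(S₁, R)
    have hn : Nat.card {p : ↥(S₂ : Set R) × ↥(Set.univ : Set R) //
          (p.1 : R) * (p.2 : R) = (p.2 : R) * (p.1 : R)} * Nat.card (S₁ : Set R) ≤
        Nat.card {p : ↥(S₁ : Set R) × ↥(Set.univ : Set R) //
          (p.1 : R) * (p.2 : R) = (p.2 : R) * (p.1 : R)} * Nat.card (S₂ : Set R) := by
      rw [card_comm_snd, card_comm_snd, Finset.sum_mul, Finset.sum_mul]
      exact Finset.sum_le_sum fun t _ => point1 S₁ S₂ h (t : R)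
    rw [relCommProb, relCommProb, div_le_div_iff₀ (by positivity) (by positivity)]
    have hq : (Nat.card {p : ↥(S₂ : Set R) × ↥(Set.univ : Set R) //
          (p.1 : R) * (p.2 : R) = (p.2 : R) * (p.1 : R)} * Nat.card (S₁ : Set R) : ℚ) ≤
        (Nat.card {p : ↥(S₁ : Set R) × ↥(Set.univ : Set R) //
          (p.1 : R) * (p.2 : R) = (p.2 : R) * (p.1 : R)} * Nat.card (S₂ : Set R) : ℚ) := by
      exact_mod_cast hn
    nlinarith [hq, hqR.le]
  · -- Pr(S₁, R) ≤ Pr(S₁, S₂)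
    have hn : Nat.card {p : ↥(S₁ : Set R) × ↥(Set.univ : Set R) //
          (p.1 : R) * (p.2 : R) = (p.2 : R) * (p.1 : R)} * Nat.card (S₂ : Set R) ≤
        Nat.card {p : ↥(S₁ : Set R) × ↥(S₂ : Set R) //
          (p.1 : R) * (p.2 : R) = (p.2 : R) * (p.1 : R)} * Nat.card (Set.univ : Set R) := by
      rw [card_comm_fst, card_comm_fst, Finset.sum_mul, Finset.sum_mul]
      exact Finset.sum_le_sum fun s _ => point2 S₂ (s : R)
    rw [relCommProb, relCommProb, div_le_div_iff₀ (by positivity) (by positivity)]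
    have hq : (Nat.card {p : ↥(S₁ : Set R) × ↥(Set.univ : Set R) //
          (p.1 : R) * (p.2 : R) = (p.2 : R) * (p.1 : R)} * Nat.card (S₂ : Set R) : ℚ) ≤
        (Nat.card {p : ↥(S₁ : Set R) × ↥(S₂ : Set R) //
          (p.1 : R) * (p.2 : R) = (p.2 : R) * (p.1 : R)} * Nat.card (Set.univ : Set R) : ℚ) := by
      exact_mod_cast hn
    nlinarith [hq, hq1.le]
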